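/- arXiv:1005.2692 — 2 statements merged into one kernel-verified Lean document; each statement's English description precedes it below -/
import Mathlib

section
/- Let a_1, …, a_k be positive integers with gcd(a_1, …, a_k) = 1 and let s ∈ ℕ. Then the number n*_s(a_1, …, a_k) of nonnegative integers having at most s representations in terms of (a_1, …, a_k) satisfies n*_s(a_1, …, a_k) = (1/a_1)·∑_{j=0}^{a_1−1} n_{j,s} − (a_1 − 1)/2; equivalently, 2·a_1·n*_s(a_1, …, a_k) = 2·∑_{j=0}^{a_1−1} n_{j,s} − a_1·(a_1 − 1). -/
/-- The number of representations of an integer `x` as a nonnegative integral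
linear combination `∑ i, m i * A i` of `A 0, …, A (k-1)`.
(Negative integers have zero representations.) -/
noncomputable def numRep {k : ℕ} (A : Fin k → ℕ) (x : ℤ) : ℕ :=
  {m : Fin k → ℕ | (∑ i, (m i : ℤ) * (A i : ℤ)) = x}.ncard

lemma repSet_finite {k : ℕ} (A : Fin k → ℕ) (hA : ∀ i, 0 < A i) (x : ℤ) :
    {m : Fin k → ℕ | (∑ i, (m i : ℤ) * (A i : ℤ)) = x}.Finite := by
  apply Set.Finite.subset (Set.Finite.pi (fun i : Fin k => Set.finite_Iic x.toNat))
  intro m hm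
  simp only [Set.mem_setOf_eq] at hm
  simp only [Set.mem_pi, Set.mem_univ, Set.mem_Iic, forall_true_left]
  intro i
  have h1 : (m i : ℤ) * A i ≤ x := by
    rw [← hm]
    exact Finset.single_le_sum (f := fun i => (m i : ℤ) * (A i : ℤ))
      (fun i _ => by positivity) (Finset.mem_univ i)
  have h2 : (m i : ℤ) ≤ (m i : ℤ) * A i := by
    have : (1 : ℤ) ≤ A i := by exact_mod_cast hA i
    nlinarith [Int.ofNat_nonneg (m i)]
  have h3 : (m i : ℤ) ≤ x := le_trans h2 h1
  have hx0 : (0 : ℤ) ≤ x := le_trans (by positivity) h3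
  exact (Int.le_toNat hx0).mpr h3

lemma numRep_le_add {k : ℕ} (A : Fin k → ℕ) (hA : ∀ i, 0 < A i) (i0 : Fin k) (x : ℤ) :
    numRep A x ≤ numRep A (x + A i0) := by
  classical
  refine Set.ncard_le_ncard_of_injOn (fun m => Function.update m i0 (m i0 + 1))
    ?_ ?_ (repSet_finite A hA _)
  · intro m hm
    simp only [Set.mem_setOf_eq] at hm ⊢
    have key : ∀ i : Fin k, ((Function.update m i0 (m i0 + 1) i : ℕ) : ℤ) * A i
        = (m i : ℤ) * A i + if i = i0 then (A i0 : ℤ) else 0 := by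
      intro i
      by_cases h : i = i0
      · subst h
        simp only [Function.update_self, if_pos rfl]
        push_cast
        ring
      · simp [Function.update_of_ne h, h]
    rw [Finset.sum_congr rfl (fun i _ => key i), Finset.sum_add_distrib, hm]
    simp
  · intro m _ m' _ h
    funext i
    by_cases hi : i = i0
    · subst hi
      have h2 := congrFun h i
      simp only [Function.update_self] at h2
      omega
    · have h2 := congrFun h i
      simpa [Function.update_of_ne hi] using h2

lemma numRep_le_add_mul {k : ℕ} (A : Fin k → ℕ) (hA : ∀ i, 0 < A i) (i0 : Fin k)
    (x : ℤ) (t : ℕ) : numRep A x ≤ numRep A (x + A i0 * t) := by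
  induction t with
  | zero => simp
  | succ t ih =>
      have h2 := numRep_le_add A hA i0 (x + A i0 * t)
      have h3 : x + (A i0 : ℤ) * (t + 1 : ℕ) = x + A i0 * t + A i0 := by push_cast; ring
      rw [h3]
      exact le_trans ih h2

/-- Selmer-type formula for `n*ₛ`, the number of nonnegative integers with at
most `s` representations: `2·a₁·n*ₛ = 2·∑_{j<a₁} n j − a₁·(a₁ − 1)`. -/
theorem stmt9 (k : ℕ) (hk : 0 < k) (a : Fin k → ℕ) (ha : ∀ i, 0 < a i)
    (hgcd : Finset.univ.gcd a = 1) (s : ℕ) (n : ℕ → ℕ)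
    (hn : ∀ j < a ⟨0, hk⟩,
      IsLeast {x : ℕ | x % a ⟨0, hk⟩ = j ∧ s < numRep a (x : ℤ)} (n j)) :
    2 * (a ⟨0, hk⟩ : ℤ) * ({x : ℕ | numRep a (x : ℤ) ≤ s}.ncard : ℤ)
      = 2 * (∑ j ∈ Finset.range (a ⟨0, hk⟩), (n j : ℤ))
        - (a ⟨0, hk⟩ : ℤ) * ((a ⟨0, hk⟩ : ℤ) - 1) := by
  classical
  set i0 : Fin k := ⟨0, hk⟩ with hi0
  set a0 : ℕ := a i0 with ha0def
  have ha0 : 0 < a0 := ha i0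
  have hmod : ∀ j < a0, n j % a0 = j := fun j hj => ((hn j hj).1).1
  have hrep : ∀ j < a0, s < numRep a ((n j : ℤ)) := fun j hj => ((hn j hj).1).2
  set q : ℕ → ℕ := fun j => n j / a0 with hq
  have hnq : ∀ j < a0, n j = a0 * q j + j := by
    intro j hj
    conv_lhs => rw [← Nat.div_add_mod (n j) a0, hmod j hj]
  -- small numbers in a residue class have few representations; large ones have many
  have hlt : ∀ x : ℕ, numRep a (x : ℤ) ≤ s → x < n (x % a0) := by
    intro x hx
    have hj : x % a0 < a0 := Nat.mod_lt _ ha0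
    by_contra hge
    push_neg at hge
    have hme : n (x % a0) ≡ x [MOD a0] := by
      unfold Nat.ModEq
      rw [hmod _ hj]
    obtain ⟨u, hu⟩ := (Nat.modEq_iff_dvd' hge).mp hme
    have hx' : (x : ℤ) = (n (x % a0) : ℤ) + (a0 : ℤ) * u := by
      have hxe : x = n (x % a0) + a0 * u := by omega
      have hc := congrArg (Nat.cast : ℕ → ℤ) hxe
      push_cast at hc
      linarith
    have hmono := numRep_le_add_mul a ha i0 ((n (x % a0) : ℤ)) u
    rw [← hx'] at hmono
    exact absurd (le_trans hmono hx) (not_le.mpr (hrep _ hj))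
  -- key set identity
  have hset : {x : ℕ | numRep a (x : ℤ) ≤ s}
      = ↑((Finset.range a0).biUnion
          (fun j => (Finset.range (q j)).image (fun t => a0 * t + j))) := by
    ext x
    simp only [Set.mem_setOf_eq, Finset.mem_coe, Finset.mem_biUnion,
      Finset.mem_image, Finset.mem_range]
    constructor
    · intro hx
      have hj : x % a0 < a0 := Nat.mod_lt _ ha0
      refine ⟨x % a0, hj, x / a0, ?_, Nat.div_add_mod x a0⟩
      have h1 := hnq _ hj
      have h2 : a0 * (x / a0) + x % a0 = x := Nat.div_add_mod x a0
      have h3 := hlt x hx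
      by_contra hge
      push_neg at hge
      have : a0 * q (x % a0) ≤ a0 * (x / a0) := Nat.mul_le_mul_left _ hge
      omega
    · rintro ⟨j, hj, t, ht, rfl⟩
      have hxmod : (a0 * t + j) % a0 = j := by
        rw [Nat.mul_add_mod, Nat.mod_eq_of_lt hj]
      have hxlt : a0 * t + j < n j := by
        have h1 := hnq j hj
        have h2 : a0 * t < a0 * q j := (Nat.mul_lt_mul_left ha0).mpr ht
        omega
      by_contra hgt
      push_neg at hgt
      have := (hn j hj).2 ⟨hxmod, hgt⟩
      omega
  rw [hset, Set.ncard_coe_finset]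
  have hcard : ((Finset.range a0).biUnion
      (fun j => (Finset.range (q j)).image (fun t => a0 * t + j))).card
      = ∑ j ∈ Finset.range a0, q j := by
    rw [Finset.card_biUnion]
    · refine Finset.sum_congr rfl (fun j _ => ?_)
      rw [Finset.card_image_of_injective _
        (fun t t' h => Nat.eq_of_mul_eq_mul_left ha0 (by omega)), Finset.card_range]
    · intro j hj j' hj' hne
      simp only [Finset.mem_coe, Finset.mem_range] at hj hj'
      rw [Function.onFun, Finset.disjoint_left]
      rintro x hx hx'
      simp only [Finset.mem_image, Finset.mem_range] at hx hx'
      obtain ⟨t, ht, rfl⟩ := hx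
      obtain ⟨t', ht', he⟩ := hx'
      have h1 : (a0 * t + j) % a0 = j := by rw [Nat.mul_add_mod, Nat.mod_eq_of_lt hj]
      have h2 : (a0 * t' + j') % a0 = j' := by rw [Nat.mul_add_mod, Nat.mod_eq_of_lt hj']
      rw [he] at h2
      rw [h2] at h1
      exact hne h1.symm
  rw [hcard]
  -- final arithmetic
  have key : ∀ j ∈ Finset.range a0, (a0 : ℤ) * (q j : ℤ) = (n j : ℤ) - (j : ℤ) := by
    intro j hj
    simp only [Finset.mem_range] at hj
    have h1 := hnq j hj
    have h2 : (n j : ℤ) = (a0 : ℤ) * (q j : ℤ) + (j : ℤ) := by exact_mod_cast congrArg (Nat.cast : ℕ → ℤ) h1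
    linarith
  have hsum : (a0 : ℤ) * (∑ j ∈ Finset.range a0, (q j : ℤ))
      = (∑ j ∈ Finset.range a0, (n j : ℤ)) - (∑ j ∈ Finset.range a0, (j : ℤ)) := by
    rw [Finset.mul_sum, ← Finset.sum_sub_distrib]
    exact Finset.sum_congr rfl key
  have hgauss : 2 * (∑ j ∈ Finset.range a0, (j : ℤ)) = (a0 : ℤ) * ((a0 : ℤ) - 1) := by
    have h := Finset.sum_range_id_mul_two a0
    have h1 : 1 ≤ a0 := ha0
    have hc : ((∑ j ∈ Finset.range a0, j : ℕ) : ℤ) = ∑ j ∈ Finset.range a0, (j : ℤ) := by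
      push_cast; rfl
    have h2 : ((∑ j ∈ Finset.range a0, j : ℕ) : ℤ) * 2 = ((a0 * (a0 - 1) : ℕ) : ℤ) := by
      exact_mod_cast congrArg (Nat.cast : ℕ → ℤ) h
    rw [hc, Nat.cast_mul, Nat.cast_sub h1] at h2
    push_cast at h2 ⊢
    linarith
  have hcast : ((∑ j ∈ Finset.range a0, q j : ℕ) : ℤ)
      = ∑ j ∈ Finset.range a0, (q j : ℤ) := by push_cast; rfl
  rw [hcast]
  linarith [hsum, hgauss]
end

section
/- Let a_1, …, a_k be positive integers with gcd(a_1, …, a_k) = 1, let d = gcd(a_2, …, a_k), and write a_j = d·a_j' for 2 ≤ j ≤ k. Then for every s ∈ ℕ, n*_s(a_1, a_2, …, a_k) = d·n*_s(a_1, a_2', a_3', …, a_k') + (a_1 − 1)·(d − 1)/2, where n*_s denotes the number of nonnegative integers having at most s representations in terms of the indicated tuple; equivalently, 2·n*_s(a_1, …, a_k) = 2·d·n*_s(a_1, a_2', …, a_k') + (a_1 − 1)·(d − 1). -/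
lemma gcd_cons_eq {k : ℕ} (a : ℕ) (c : Fin k → ℕ) :
    Finset.univ.gcd (Fin.cons a c) = Nat.gcd a (Finset.univ.gcd c) := by
  rw [Fin.univ_succ, Finset.cons_eq_insert, Finset.gcd_insert, Finset.map_eq_image,
    Finset.gcd_image]
  simp [Function.comp]
  rfl

lemma numRep_neg {k : ℕ} (A : Fin k → ℕ) {x : ℤ} (hx : x < 0) : numRep A x = 0 := by
  unfold numRep
  convert Set.ncard_empty (Fin k → ℕ)
  rw [Set.eq_empty_iff_forall_notMem]
  intro m hm
  simp only [Set.mem_setOf_eq] at hm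
  have : (0:ℤ) ≤ ∑ i, (m i : ℤ) * (A i : ℤ) := by positivity
  omega

lemma frob : ∀ (k : ℕ) (c : Fin k → ℕ), ∃ N : ℕ, ∀ y : ℕ,
    Finset.univ.gcd c ∣ y → N ≤ y → ∃ n : Fin k → ℕ, ∑ i, n i * c i = y := by
  intro k
  induction k with
  | zero =>
    intro c
    refine ⟨0, fun y hy _ => ?_⟩
    have : Finset.univ.gcd c = 0 := by simp
    rw [this] at hy
    exact ⟨finZeroElim, by simpa using (zero_dvd_iff.mp hy).symm⟩
  | succ k ih =>
    intro c
    obtain ⟨N', hN'⟩ := ih (Fin.tail c)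
    set g' := Finset.univ.gcd (Fin.tail c) with hg'
    have hgc : Finset.univ.gcd c = Nat.gcd (c 0) g' := by
      conv_lhs => rw [← Fin.cons_self_tail c]
      exact gcd_cons_eq _ _
    rcases Nat.eq_zero_or_pos g' with hg0 | hgpos
    · have htail : ∀ i, Fin.tail c i = 0 := fun i =>
        Finset.gcd_eq_zero_iff.mp hg0 i (Finset.mem_univ i)
      refine ⟨0, fun y hy _ => ?_⟩
      rw [hgc, hg0, Nat.gcd_zero_right] at hy
      obtain ⟨m, hm⟩ := hy
      refine ⟨Fin.cons m 0, ?_⟩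
      rw [Fin.sum_univ_succ]
      simp only [Fin.cons_zero, Fin.cons_succ]
      rw [Finset.sum_eq_zero (fun i _ => by simp [show c i.succ = 0 from htail i])]
      simpa [mul_comm] using hm.symm
    · set g := Nat.gcd (c 0) g' with hg
      have hgpos2 : 0 < g := Nat.gcd_pos_of_pos_right _ hgpos
      set u := c 0 / g with hu
      set v := g' / g with hv
      have hvpos : 0 < v := Nat.div_pos (Nat.le_of_dvd hgpos (Nat.gcd_dvd_right _ _)) hgpos2
      have hcuv : Nat.Coprime u v := Nat.coprime_div_gcd_div_gcd hgpos2
      have hc0 : c 0 = g * u := (Nat.mul_div_cancel' (Nat.gcd_dvd_left _ _)).symm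
      have hg'v : g' = g * v := (Nat.mul_div_cancel' (Nat.gcd_dvd_right _ _)).symm
      refine ⟨N' + g' * c 0, fun y hy hyN => ?_⟩
      rw [hgc] at hy
      obtain ⟨w, hw⟩ := hy
      haveI : NeZero v := ⟨hvpos.ne'⟩
      -- find m < v with m * u ≡ w [mod v]
      set m : ℕ := ((w : ZMod v) * ((ZMod.unitOfCoprime u hcuv)⁻¹ : (ZMod v)ˣ)).val with hm
      have hmv : m < v := ZMod.val_lt _
      have hmw : ((m * u : ℕ) : ZMod v) = (w : ZMod v) := by
        push_cast
        rw [hm, ZMod.natCast_val, ZMod.cast_id]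
        have : ((u : ZMod v)) = ((ZMod.unitOfCoprime u hcuv : (ZMod v)ˣ) : ZMod v) := by
          rw [ZMod.coe_unitOfCoprime]
        rw [this]
        exact Units.inv_mul_cancel_right _ _
      -- m * c 0 ≤ y - N'
      have hmc : m * c 0 ≤ g' * c 0 := by
        apply Nat.mul_le_mul_right
        calc m ≤ v := hmv.le
        _ ≤ g * v := Nat.le_mul_of_pos_left _ hgpos2
        _ = g' := hg'v.symm
      have hmuw : m * u ≤ w := by
        have h1 : g * (m * u) ≤ g * w := by
          calc g * (m * u) = m * (g * u) := by ring
          _ = m * c 0 := by rw [← hc0]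
          _ ≤ g' * c 0 := hmc
          _ ≤ y := le_trans (Nat.le_add_left _ _) hyN
          _ = g * w := hw
        exact Nat.le_of_mul_le_mul_left h1 hgpos2
      have hdvd : v ∣ w - m * u := by
        have : ((w - m * u : ℕ) : ZMod v) = 0 := by
          rw [Nat.cast_sub hmuw, hmw, sub_self]
        exact (ZMod.natCast_eq_zero_iff _ _).mp this
      have hsub : g' ∣ y - m * c 0 := by
        have heq : y - m * c 0 = g * (w - m * u) := by
          rw [hw, hc0]
          rw [Nat.mul_sub]
          congr 1
          ring
        rw [heq, hg'v]
        exact mul_dvd_mul_left g hdvd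
      have hsubN : N' ≤ y - m * c 0 := by omega
      obtain ⟨n', hn'⟩ := hN' (y - m * c 0) hsub hsubN
      refine ⟨Fin.cons m n', ?_⟩
      rw [Fin.sum_univ_succ]
      simp only [Fin.cons_zero, Fin.cons_succ]
      have : ∑ i : Fin k, n' i * c i.succ = y - m * c 0 := hn'
      omega

lemma lowRep_finite {k : ℕ} (A : Fin k → ℕ) (hA : ∀ i, 0 < A i) (i0 i1 : Fin k)
    (hne : i0 ≠ i1) (hgcd : Finset.univ.gcd A = 1) (s : ℕ) :
    {x : ℕ | numRep A (x : ℤ) ≤ s}.Finite := by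
  obtain ⟨N, hN⟩ := frob k A
  rw [hgcd] at hN
  apply Set.Finite.subset (Set.finite_Iio (N + s * (A i0 * A i1)))
  intro x hx
  simp only [Set.mem_setOf_eq] at hx
  simp only [Set.mem_Iio]
  by_contra h
  push_neg at h
  obtain ⟨n, hn⟩ := hN (x - s * (A i0 * A i1)) (one_dvd _) (by omega)
  set P := A i0 * A i1 with hP
  have hPx : s * P ≤ x := by omega
  set φ : ℕ → (Fin k → ℕ) := fun j =>
    Function.update (Function.update n i0 (n i0 + j * A i1)) i1 (n i1 + (s - j) * A i0) with hφ
  have hmem : ∀ j ≤ s, φ j ∈ {m : Fin k → ℕ | (∑ i, (m i : ℤ) * (A i : ℤ)) = (x:ℤ)} := by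
    intro j hj
    simp only [Set.mem_setOf_eq]
    have hnat : ∑ i, φ j i * A i = x := by
      have hterm : ∀ i, φ j i * A i = n i * A i +
          ((if i = i0 then j * A i1 * A i0 else 0) + (if i = i1 then (s - j) * A i0 * A i1 else 0)) := by
        intro i
        by_cases h0 : i = i0
        · subst h0
          simp only [hφ, Function.update_of_ne hne, Function.update_self,
            eq_self_iff_true, if_true, if_neg hne]
          ring
        · by_cases h1 : i = i1
          · subst h1
            simp only [hφ, Function.update_self, if_neg h0, eq_self_iff_true, if_true]
            ring
          · simp only [hφ, Function.update_of_ne h1, Function.update_of_ne h0, if_neg h0,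
              if_neg h1]
            ring
      rw [Finset.sum_congr rfl (fun i _ => hterm i)]
      rw [Finset.sum_add_distrib, Finset.sum_add_distrib]
      simp only [Finset.sum_ite_eq', Finset.mem_univ, if_pos]
      have hsj : j * A i1 * A i0 + (s - j) * A i0 * A i1 = s * P := by
        have e1 : j * A i1 * A i0 + (s - j) * A i0 * A i1 = (j + (s - j)) * (A i0 * A i1) := by
          ring
        rw [e1, show j + (s - j) = s from by omega, hP]
      rw [hn]
      omega
    have := congrArg (Nat.cast : ℕ → ℤ) hnat
    push_cast at this
    exact this
  have hinj : Set.InjOn φ ↑(Finset.range (s+1)) := by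
    intro j1 _ j2 _ heq
    have h1 : φ j1 i0 = φ j2 i0 := congrFun heq i0
    simp only [hφ, Function.update_of_ne hne, Function.update_self] at h1
    have h2 : j1 * A i1 = j2 * A i1 := by omega
    exact Nat.eq_of_mul_eq_mul_right (hA i1) h2
  have hsub : φ '' ↑(Finset.range (s+1)) ⊆ {m : Fin k → ℕ | (∑ i, (m i : ℤ) * (A i : ℤ)) = (x:ℤ)} := by
    rintro _ ⟨j, hj, rfl⟩
    simp only [Finset.coe_range, Set.mem_Iio] at hj
    exact hmem j (by omega)
  have hcard : s + 1 ≤ numRep A (x : ℤ) := by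
    calc s + 1 = (↑(Finset.range (s+1)) : Set ℕ).ncard := by
          rw [Set.ncard_coe_finset, Finset.card_range]
    _ = (φ '' ↑(Finset.range (s+1))).ncard := (Set.ncard_image_of_injOn hinj).symm
    _ ≤ numRep A (x : ℤ) := Set.ncard_le_ncard hsub (repSet_finite A hA _)
  omega

lemma numRep_shift {k : ℕ} (a₁ d : ℕ) (b b' : Fin k → ℕ) (hb' : ∀ i, b i = d * b' i)
    (hdpos : 0 < d) (hcop : Nat.Coprime a₁ d) (r : ℕ) (hr : r < d) (y : ℤ) :
    numRep (Fin.cons a₁ b) ((r:ℤ) * a₁ + d * y) = numRep (Fin.cons a₁ b') y := by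
  have hdz : (d:ℤ) ≠ 0 := by exact_mod_cast hdpos.ne'
  set Φ : (Fin (k+1) → ℕ) → (Fin (k+1) → ℕ) := fun n => Fin.cons (r + d * n 0) (Fin.tail n)
    with hΦ
  have hΦinj : Function.Injective Φ := by
    intro n n' h
    have h0 : r + d * n 0 = r + d * n' 0 := by
      have := congrFun h 0
      simpa [hΦ] using this
    have hn0 : n 0 = n' 0 := by
      have : d * n 0 = d * n' 0 := by omega
      exact Nat.eq_of_mul_eq_mul_left hdpos this
    funext i
    induction i using Fin.cases with
    | zero => exact hn0
    | succ i =>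
      have := congrFun h i.succ
      simpa [hΦ, Fin.tail] using this
  have hsum : ∀ (mt : Fin k → ℕ), (∑ i, (mt i : ℤ) * (b i : ℤ))
      = d * ∑ i, (mt i : ℤ) * (b' i : ℤ) := by
    intro mt
    rw [Finset.mul_sum]
    refine Finset.sum_congr rfl fun i _ => ?_
    rw [hb' i]; push_cast; ring
  have hset : {m : Fin (k+1) → ℕ | (∑ i, (m i : ℤ) * ((Fin.cons a₁ b : Fin (k+1) → ℕ) i : ℤ))
        = (r:ℤ) * a₁ + d * y}
      = Φ '' {n : Fin (k+1) → ℕ | (∑ i, (n i : ℤ) * ((Fin.cons a₁ b' : Fin (k+1) → ℕ) i : ℤ))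
        = y} := by
    ext m
    simp only [Set.mem_setOf_eq, Set.mem_image]
    constructor
    · intro hm
      rw [Fin.sum_univ_succ] at hm
      simp only [Fin.cons_zero, Fin.cons_succ] at hm
      rw [hsum (fun i => m i.succ)] at hm
      set T := ∑ i : Fin k, ((m i.succ : ℤ)) * (b' i : ℤ) with hT
      have hkey : ((m 0 : ℤ) - r) * a₁ = d * (y - T) := by linarith [hm]
      have hdvd : (d:ℤ) ∣ ((m 0 : ℤ) - r) := by
        have hco : IsCoprime (d:ℤ) (a₁:ℤ) := by
          rw [Int.isCoprime_iff_gcd_eq_one, Int.gcd_natCast_natCast]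
          exact Nat.Coprime.gcd_eq_one (Nat.Coprime.symm hcop)
        exact hco.dvd_of_dvd_mul_right ⟨y - T, hkey⟩
      obtain ⟨t, ht⟩ := hdvd
      have ht0 : 0 ≤ t := by
        by_contra hneg
        push_neg at hneg
        have h1 : t ≤ -1 := by omega
        have h2 : (d:ℤ) * t ≤ (d:ℤ) * (-1) := by
          apply mul_le_mul_of_nonneg_left h1 (by positivity)
        have h3 : (0:ℤ) ≤ (m 0 : ℤ) := Int.ofNat_nonneg _
        have h4 : (r:ℤ) < d := by exact_mod_cast hr
        omega
      refine ⟨Fin.cons t.toNat (fun i => m i.succ), ?_, ?_⟩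
      · rw [Fin.sum_univ_succ]
        simp only [Fin.cons_zero, Fin.cons_succ]
        have hta : t * a₁ = y - T := by
          have : (d:ℤ) * (t * (a₁:ℤ)) = (d:ℤ) * (y - T) := by
            rw [← hkey, ht]; ring
          exact mul_left_cancel₀ hdz this
        have : (t.toNat : ℤ) = t := Int.toNat_of_nonneg ht0
        rw [this]
        linarith [hta]
      · funext i
        induction i using Fin.cases with
        | zero =>
          simp only [hΦ, Fin.cons_zero]
          have : (↑(r + d * t.toNat) : ℤ) = (m 0 : ℤ) := by
            push_cast
            rw [Int.toNat_of_nonneg ht0]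
            linarith [ht]
          exact_mod_cast this
        | succ i =>
          simp [hΦ, Fin.tail]
    · rintro ⟨n, hn, rfl⟩
      rw [Fin.sum_univ_succ] at hn ⊢
      simp only [Fin.cons_zero, Fin.cons_succ, hΦ, Fin.tail] at *
      rw [hsum (fun i => n i.succ)]
      push_cast
      linear_combination (d:ℤ) * hn
  unfold numRep
  rw [hset, Set.ncard_image_of_injective _ hΦinj]

lemma two_mul_sum_div (a d : ℕ) (ha : 0 < a) (hd : 0 < d) (hcop : Nat.Coprime a d) :
    2 * ∑ r ∈ Finset.range d, (r * a / d) = (a - 1) * (d - 1) := by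
  haveI : NeZero d := ⟨hd.ne'⟩
  set u := ZMod.unitOfCoprime a hcop with hu
  set a' := ((u⁻¹ : (ZMod d)ˣ) : ZMod d).val with ha'
  have hcast : ∀ x y : ℕ, ((x : ZMod d) = (y : ZMod d)) → x % d = y % d := by
    intro x y h
    exact (ZMod.natCast_eq_natCast_iff _ _ _).mp h
  have ha'c : ((a' : ℕ) : ZMod d) = ((u⁻¹ : (ZMod d)ˣ) : ZMod d) := by
    rw [ha', ZMod.natCast_val, ZMod.cast_id]
  have hac : ((a : ℕ) : ZMod d) = (u : ZMod d) := (ZMod.coe_unitOfCoprime a hcop).symm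
  have hmod : ∑ r ∈ Finset.range d, (r * a % d) = ∑ r ∈ Finset.range d, r := by
    apply Finset.sum_nbij' (i := fun r => r * a % d) (j := fun r => r * a' % d)
    · intro r hr; exact Finset.mem_range.mpr (Nat.mod_lt _ hd)
    · intro r hr; exact Finset.mem_range.mpr (Nat.mod_lt _ hd)
    · intro r hr
      have : ((r * a % d) * a' : ℕ) % d = r % d := by
        apply hcast
        push_cast [ZMod.natCast_mod]
        rw [ha'c, hac]
        exact Units.mul_inv_cancel_right _ _
      rw [this, Nat.mod_eq_of_lt (Finset.mem_range.mp hr)]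
    · intro r hr
      have : ((r * a' % d) * a : ℕ) % d = r % d := by
        apply hcast
        push_cast [ZMod.natCast_mod]
        rw [ha'c, hac]
        exact Units.inv_mul_cancel_right _ _
      rw [this, Nat.mod_eq_of_lt (Finset.mem_range.mp hr)]
    · intro r hr; rfl
  set S := ∑ r ∈ Finset.range d, r with hS
  set D := ∑ r ∈ Finset.range d, (r * a / d) with hD
  have e1 : ∑ r ∈ Finset.range d, (r * a) = d * D + S := by
    rw [hD, Finset.mul_sum, ← hmod, ← Finset.sum_add_distrib]
    exact Finset.sum_congr rfl fun r _ => (Nat.div_add_mod (r * a) d).symm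
  have e2 : ∑ r ∈ Finset.range d, (r * a) = S * a := by
    rw [hS, Finset.sum_mul]
  have e3 : S * 2 = d * (d - 1) := Finset.sum_range_id_mul_two d
  obtain ⟨a2, rfl⟩ : ∃ a2, a = a2 + 1 := ⟨a - 1, by omega⟩
  obtain ⟨d2, rfl⟩ : ∃ d2, d = d2 + 1 := ⟨d - 1, by omega⟩
  simp only [Nat.add_sub_cancel] at e3 ⊢
  have h1 : (d2 + 1) * D = S * a2 := by
    have : S * (a2 + 1) = S * a2 + S := by ring
    omega
  have key : (d2 + 1) * (2 * D) = (d2 + 1) * (a2 * d2) := by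
    calc (d2 + 1) * (2 * D) = 2 * ((d2 + 1) * D) := by ring
    _ = 2 * (S * a2) := by rw [h1]
    _ = (S * 2) * a2 := by ring
    _ = ((d2 + 1) * d2) * a2 := by rw [e3]
    _ = (d2 + 1) * (a2 * d2) := by ring
  exact Nat.eq_of_mul_eq_mul_left (by omega) key

lemma ncard_biUnion {α ι : Type*} (s : Finset ι) (f : ι → Set α)
    (hfin : ∀ i ∈ s, (f i).Finite)
    (hdisj : ∀ i ∈ s, ∀ j ∈ s, i ≠ j → Disjoint (f i) (f j)) :
    (⋃ i ∈ s, f i).ncard = ∑ i ∈ s, (f i).ncard := by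
  classical
  induction s using Finset.induction_on with
  | empty => simp
  | insert _ _ ha ih =>
    rename_i a t
    rw [Finset.sum_insert ha]
    have : (⋃ i ∈ insert a t, f i) = f a ∪ ⋃ i ∈ t, f i := by
      simp [Set.biUnion_insert]
    rw [this]
    rw [Set.ncard_union_eq ?_ (hfin a (Finset.mem_insert_self a t)) ?_]
    · rw [ih (fun i hi => hfin i (Finset.mem_insert_of_mem hi))
        (fun i hi j hj hij => hdisj i (Finset.mem_insert_of_mem hi) j
          (Finset.mem_insert_of_mem hj) hij)]
    · rw [Set.disjoint_iUnion_right]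
      intro i
      rw [Set.disjoint_iUnion_right]
      intro hi
      exact hdisj a (Finset.mem_insert_self a t) i (Finset.mem_insert_of_mem hi)
        (fun h => ha (h ▸ hi))
    · exact Set.Finite.biUnion t.finite_toSet
        (fun i hi => hfin i (Finset.mem_insert_of_mem hi))


/-- Johnson-type reduction for `n*ₛ`, the number of nonnegative integers with at
most `s` representations: `2·n*ₛ(a₁,…,a_k) = 2·d·n*ₛ(a₁,a₂',…,a_k') + (a₁−1)(d−1)`. -/
theorem stmt11 (k : ℕ) (hk : 0 < k) (a₁ : ℕ) (ha₁ : 0 < a₁)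
    (b b' : Fin k → ℕ) (hb : ∀ i, 0 < b i)
    (d : ℕ) (hd : d = Finset.univ.gcd b) (hb' : ∀ i, b i = d * b' i)
    (hgcd : Finset.univ.gcd (Fin.cons a₁ b) = 1)
    (s : ℕ) :
    2 * {x : ℕ | numRep (Fin.cons a₁ b) (x : ℤ) ≤ s}.ncard
      = 2 * d * {x : ℕ | numRep (Fin.cons a₁ b') (x : ℤ) ≤ s}.ncard
        + (a₁ - 1) * (d - 1) := by
  have i₀ : Fin k := ⟨0, hk⟩
  have hd1 : 0 < d := by
    rcases Nat.eq_zero_or_pos d with h0 | h; swap; · exact h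
    exfalso
    rw [h0] at hd
    have := Finset.gcd_eq_zero_iff.mp hd.symm i₀ (Finset.mem_univ i₀)
    exact (hb i₀).ne' this
  have hb'pos : ∀ i, 0 < b' i := by
    intro i
    have := hb i
    rw [hb' i] at this
    rcases Nat.eq_zero_or_pos (b' i) with h0 | h
    · rw [h0, mul_zero] at this; omega
    · exact h
  have hgcdb' : Finset.univ.gcd b' = 1 := by
    have h1 : Finset.univ.gcd b = d * Finset.univ.gcd b' := by
      have : b = fun i => d * b' i := funext hb'
      rw [this, Finset.gcd_mul_left]
      simp
    rw [← hd] at h1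
    have h2 : d * 1 = d * Finset.univ.gcd b' := by rw [mul_one]; exact h1
    exact (Nat.eq_of_mul_eq_mul_left hd1 h2).symm
  have hcop : Nat.Coprime a₁ d := by
    have := hgcd
    rw [gcd_cons_eq, ← hd] at this
    exact this
  haveI : NeZero d := ⟨hd1.ne'⟩
  set S' : Set ℕ := {x : ℕ | numRep (Fin.cons a₁ b') (x:ℤ) ≤ s} with hS'
  have hS'fin : S'.Finite := by
    apply lowRep_finite (Fin.cons a₁ b') ?_ 0 1 ?_ ?_ s
    · intro i
      induction i using Fin.cases with
      | zero => simpa using ha₁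
      | succ i => simpa using hb'pos i
    · apply Fin.ne_of_val_ne
      simp only [Fin.val_zero, Fin.val_one']
      rw [Nat.mod_eq_of_lt (by omega)]
      omega
    · rw [gcd_cons_eq, hgcdb']
      simp
  set N' := S'.ncard with hN'
  -- key numRep computation
  have hkey : ∀ r j : ℕ, r < d → numRep (Fin.cons a₁ b) (((r * a₁) % d + d * j : ℕ) : ℤ)
      = numRep (Fin.cons a₁ b') ((j:ℤ) - ((r * a₁ / d : ℕ) : ℤ)) := by
    intro r j hr
    have h2 : (d:ℤ) * ((r*a₁/d : ℕ):ℤ) + ((r*a₁ % d : ℕ):ℤ) = (r:ℤ)*(a₁:ℤ) := by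
      have := Nat.div_add_mod (r * a₁) d
      exact_mod_cast congrArg (Nat.cast : ℕ → ℤ) this
    have heq : (((r * a₁) % d + d * j : ℕ) : ℤ)
        = (r:ℤ) * (a₁:ℤ) + (d:ℤ) * ((j:ℤ) - ((r*a₁/d : ℕ):ℤ)) := by
      push_cast
      push_cast at h2
      linarith [h2]
    rw [heq]
    exact numRep_shift a₁ d b b' hb' hd1 hcop r hr _
  -- per-residue description
  have hSr : ∀ r, r < d → {x : ℕ | x % d = (r * a₁) % d ∧ numRep (Fin.cons a₁ b) (x:ℤ) ≤ s}
      = (fun j => (r * a₁) % d + d * j) ''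
        (Set.Iio (r * a₁ / d) ∪ (fun z => r * a₁ / d + z) '' S') := by
    intro r hr
    ext x
    simp only [Set.mem_setOf_eq, Set.mem_image, Set.mem_union, Set.mem_Iio]
    constructor
    · rintro ⟨hx1, hx2⟩
      have hmd := Nat.mod_add_div x d
      refine ⟨x / d, ?_, by omega⟩
      by_cases hj : x / d < r * a₁ / d
      · exact Or.inl hj
      · right
        refine ⟨x / d - r * a₁ / d, ?_, by omega⟩
        have hk2 := hkey r (x/d) hr
        have hxe : (r*a₁)%d + d*(x/d) = x := by omega
        rw [hxe] at hk2
        simp only [hS', Set.mem_setOf_eq]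
        rw [show ((x/d - r*a₁/d : ℕ) : ℤ) = ((x/d : ℕ) : ℤ) - ((r*a₁/d : ℕ) : ℤ) from
          Nat.cast_sub (le_of_not_gt hj)]
        omega
    · rintro ⟨j, hj, rfl⟩
      have hρ : (r*a₁) % d < d := Nat.mod_lt _ hd1
      constructor
      · rw [Nat.add_mul_mod_self_left]
        exact Nat.mod_eq_of_lt hρ
      · have hk2 := hkey r j hr
        rcases hj with hj | ⟨z, hz, rfl⟩
        · rw [hk2, numRep_neg]
          · exact Nat.zero_le s
          · have : (j:ℤ) < ((r*a₁/d : ℕ):ℤ) := by exact_mod_cast hj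
            omega
        · rw [hk2]
          have he : ((r*a₁/d + z : ℕ):ℤ) - ((r*a₁/d : ℕ):ℤ) = (z:ℤ) := by
            push_cast; ring
          rw [he]
          exact hz
  -- coverage
  have hcover : {x : ℕ | numRep (Fin.cons a₁ b) (x:ℤ) ≤ s}
      = ⋃ r ∈ Finset.range d,
          {x : ℕ | x % d = (r * a₁) % d ∧ numRep (Fin.cons a₁ b) (x:ℤ) ≤ s} := by
    ext x
    simp only [Set.mem_iUnion, Finset.mem_range, Set.mem_setOf_eq, exists_prop]
    constructor
    · intro hx
      set u := ZMod.unitOfCoprime a₁ hcop with hu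
      refine ⟨((x : ZMod d) * ((u⁻¹ : (ZMod d)ˣ) : ZMod d)).val, ZMod.val_lt _, ?_, hx⟩
      have : ((((x : ZMod d) * ((u⁻¹ : (ZMod d)ˣ) : ZMod d)).val * a₁ : ℕ) : ZMod d)
          = ((x : ℕ) : ZMod d) := by
        push_cast
        rw [ZMod.natCast_val, ZMod.cast_id]
        rw [show ((a₁ : ℕ) : ZMod d) = ((u : (ZMod d)ˣ) : ZMod d) from
          (ZMod.coe_unitOfCoprime a₁ hcop).symm]
        exact Units.inv_mul_cancel_right _ _
      exact ((ZMod.natCast_eq_natCast_iff _ _ _).mp this).symm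
    · rintro ⟨r, hr, _, hx⟩
      exact hx
  -- counting
  have hcount : ∀ r, r < d →
      {x : ℕ | x % d = (r * a₁) % d ∧ numRep (Fin.cons a₁ b) (x:ℤ) ≤ s}.ncard
        = r * a₁ / d + N' := by
    intro r hr
    rw [hSr r hr]
    have hinj : Function.Injective (fun j => (r * a₁) % d + d * j) := by
      intro x y h
      simp only at h
      have : d * x = d * y := by omega
      exact Nat.eq_of_mul_eq_mul_left hd1 this
    rw [Set.ncard_image_of_injective _ hinj]
    rw [Set.ncard_union_eq ?_ (Set.finite_Iio _) (hS'fin.image _)]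
    · rw [show Set.Iio (r * a₁ / d) = ↑(Finset.range (r * a₁ / d)) from
        (Finset.coe_range _).symm, Set.ncard_coe_finset, Finset.card_range]
      rw [Set.ncard_image_of_injective _ (add_right_injective (r * a₁ / d))]
    · rw [Set.disjoint_left]
      rintro a ha ⟨z, hz, rfl⟩
      simp only [Set.mem_Iio] at ha
      omega
  -- disjointness
  have hdisj : ∀ r ∈ Finset.range d, ∀ r' ∈ Finset.range d, r ≠ r' →
      Disjoint {x : ℕ | x % d = (r * a₁) % d ∧ numRep (Fin.cons a₁ b) (x:ℤ) ≤ s}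
        {x : ℕ | x % d = (r' * a₁) % d ∧ numRep (Fin.cons a₁ b) (x:ℤ) ≤ s} := by
    intro r hr r' hr' hne
    rw [Finset.mem_range] at hr hr'
    rw [Set.disjoint_left]
    rintro x ⟨h1, _⟩ ⟨h2, _⟩
    have hmeq : r * a₁ ≡ r' * a₁ [MOD d] := by
      unfold Nat.ModEq
      omega
    have hco : Nat.gcd d a₁ = 1 := Nat.Coprime.symm hcop
    have := Nat.ModEq.cancel_right_of_coprime hco hmeq
    have : r % d = r' % d := this
    rw [Nat.mod_eq_of_lt hr, Nat.mod_eq_of_lt hr'] at this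
    exact hne this
  have hfin : ∀ r ∈ Finset.range d,
      ({x : ℕ | x % d = (r * a₁) % d ∧ numRep (Fin.cons a₁ b) (x:ℤ) ≤ s}).Finite := by
    intro r hr
    rw [Finset.mem_range] at hr
    rw [hSr r hr]
    exact ((Set.finite_Iio _).union (hS'fin.image _)).image _
  rw [hcover, ncard_biUnion _ _ hfin hdisj]
  rw [Finset.sum_congr rfl (fun r hr => hcount r (Finset.mem_range.mp hr))]
  rw [Finset.sum_add_distrib, Finset.sum_const, Finset.card_range, smul_eq_mul]
  have h2F := two_mul_sum_div a₁ d ha₁ hd1 hcop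
  have hexp : 2 * d * N' = 2 * (d * N') := by ring
  linarith [h2F]
end
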